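/- arXiv:2204.00595 — 2 statements merged into one kernel-verified Lean document; each statement's English description precedes it below -/
import Mathlib

section
/- Let n = m² for an integer m ≥ 2 and let A be an n×n real matrix. Then there exists a Monarch matrix M* minimizing ‖A − M‖_F over all Monarch matrices M, and the minimum value satisfies ‖A − M*‖_F² = Σ_{j,k=0}^{m−1} min_{B : rank(B) ≤ 1} ‖A_{jk} − B‖_F², where A_{jk} is the m×m matrix with A_{jk}[ℓ,i] = A[ℓ·m + j, k·m + i], and the inner minimum is over m×m real matrices B of rank at most 1 (this minimum is attained). -/
open Matrix

/-- `BD b n R`: `R` is block-diagonal with `n/b` diagonal blocks of size `b × b`. -/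
def BD (b n : ℕ) (R : Matrix (Fin n) (Fin n) ℝ) : Prop :=
  ∀ i j : Fin n, i.val / b ≠ j.val / b → R i j = 0

/-- The permutation matrix `P_{(b,n)}`. -/
def permMat (b n : ℕ) : Matrix (Fin n) (Fin n) ℝ :=
  Matrix.of fun i j => if i.val = j.val % b * (n / b) + j.val / b then 1 else 0

/-- `M` is a Monarch matrix: `M = P L Pᵀ R` with `L, R ∈ BD(m, m²)`, `P = P_{(m,m²)}`. -/
def IsMonarch (m : ℕ) (M : Matrix (Fin (m * m)) (Fin (m * m)) ℝ) : Prop :=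
  ∃ L R : Matrix (Fin (m * m)) (Fin (m * m)) ℝ,
    BD m (m * m) L ∧ BD m (m * m) R ∧
    M = permMat m (m * m) * L * (permMat m (m * m))ᵀ * R

/-- Squared Frobenius norm. -/
noncomputable def frobSq {p q : ℕ} (X : Matrix (Fin p) (Fin q) ℝ) : ℝ :=
  ∑ i, ∑ j, (X i j) ^ 2

/-- Frobenius norm. -/
noncomputable def frobNorm {p q : ℕ} (X : Matrix (Fin p) (Fin q) ℝ) : ℝ :=
  Real.sqrt (frobSq X)

lemma idx_lt {m : ℕ} (a c : Fin m) : a.val * m + c.val < m * m := by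
  have h1 : a.val + 1 ≤ m := a.isLt
  calc a.val * m + c.val < a.val * m + m := by omega
    _ = (a.val + 1) * m := by ring
    _ ≤ m * m := Nat.mul_le_mul h1 le_rfl

/-- The `(j,k)` block of `A`: `A_{jk}[ℓ,i] = A[ℓm+j, km+i]`. -/
def blockOf {m : ℕ} (A : Matrix (Fin (m * m)) (Fin (m * m)) ℝ) (j k : Fin m) :
    Matrix (Fin m) (Fin m) ℝ :=
  Matrix.of fun ℓ i => A ⟨ℓ.val * m + j.val, idx_lt ℓ j⟩ ⟨k.val * m + i.val, idx_lt k i⟩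

/-! ### Auxiliary index lemmas -/

def pr {m : ℕ} (a c : Fin m) : Fin (m * m) := ⟨a.val * m + c.val, idx_lt a c⟩

lemma pr_mod {m : ℕ} (a c : Fin m) : (pr a c).val % m = c.val := by
  show (a.val * m + c.val) % m = c.val
  rw [mul_comm, Nat.mul_add_mod]
  exact Nat.mod_eq_of_lt c.isLt

lemma pr_div {m : ℕ} (a c : Fin m) : (pr a c).val / m = a.val := by
  have hm : 0 < m := a.pos
  show (a.val * m + c.val) / m = a.val
  rw [add_comm, Nat.add_mul_div_right _ _ hm, Nat.div_eq_of_lt c.isLt, Nat.zero_add]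

lemma div_lt_of_sq {m : ℕ} (x : Fin (m * m)) : x.val / m < m :=
  Nat.div_lt_of_lt_mul x.isLt

lemma mod_lt_of_sq {m : ℕ} (hm : 0 < m) (x : Fin (m * m)) : x.val % m < m :=
  Nat.mod_lt _ hm

lemma pr_decomp {m : ℕ} (hm : 0 < m) (x : Fin (m * m)) :
    x = pr ⟨x.val / m, div_lt_of_sq x⟩ ⟨x.val % m, mod_lt_of_sq hm x⟩ := by
  apply Fin.ext
  show x.val = x.val / m * m + x.val % m
  calc x.val = m * (x.val / m) + x.val % m := (Nat.div_add_mod _ _).symm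
    _ = x.val / m * m + x.val % m := by ring

lemma sum_decomp {m : ℕ} (f : Fin (m * m) → ℝ) :
    ∑ x, f x = ∑ a : Fin m, ∑ c : Fin m, f (pr a c) := by
  rcases Nat.eq_zero_or_pos m with hm | hm
  · subst hm; simp
  have hbij : Function.Bijective (fun p : Fin m × Fin m => pr p.1 p.2) := by
    rw [Fintype.bijective_iff_injective_and_card]
    constructor
    · intro p q h
      have h' : pr p.1 p.2 = pr q.1 q.2 := h
      have h1 : (pr p.1 p.2).val / m = (pr q.1 q.2).val / m := by rw [h']
      have h2 : (pr p.1 p.2).val % m = (pr q.1 q.2).val % m := by rw [h']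
      rw [pr_div, pr_div] at h1
      rw [pr_mod, pr_mod] at h2
      exact Prod.ext (Fin.ext h1) (Fin.ext h2)
    · simp
  rw [← Fintype.sum_bijective _ hbij _ f (fun p => rfl), Fintype.sum_prod_type]

lemma swap_idx {m a x : ℕ} (hx : x < m * m) (hm : 0 < m)
    (h : a = x % m * m + x / m) : x = a % m * m + a / m := by
  have hdiv : x / m < m := Nat.div_lt_of_lt_mul hx
  have h1 : a % m = x / m := by
    rw [h, mul_comm, Nat.mul_add_mod]; exact Nat.mod_eq_of_lt hdiv
  have h2 : a / m = x % m := by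
    rw [h, add_comm, Nat.add_mul_div_right _ _ hm, Nat.div_eq_of_lt hdiv, Nat.zero_add]
  rw [h1, h2]
  calc x = m * (x / m) + x % m := (Nat.div_add_mod _ _).symm
    _ = x / m * m + x % m := by ring

lemma permMat_apply {m : ℕ} (hm : 0 < m) (a x : Fin (m * m)) :
    permMat m (m * m) a x = if x.val = a.val % m * m + a.val / m then 1 else 0 := by
  unfold permMat
  rw [Matrix.of_apply, Nat.mul_div_cancel _ hm]
  have hiff : (a.val = x.val % m * m + x.val / m) ↔ (x.val = a.val % m * m + a.val / m) :=
    ⟨fun h => swap_idx x.isLt hm h, fun h => swap_idx a.isLt hm h⟩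
  rw [if_congr hiff rfl rfl]

def sw {m : ℕ} (hm : 0 < m) (a : Fin (m * m)) : Fin (m * m) :=
  pr ⟨a.val % m, mod_lt_of_sq hm a⟩ ⟨a.val / m, div_lt_of_sq a⟩

lemma permMat_apply' {m : ℕ} (hm : 0 < m) (a x : Fin (m * m)) :
    permMat m (m * m) a x = if x = sw hm a then 1 else 0 := by
  rw [permMat_apply hm]
  congr 1
  simp [Fin.ext_iff, sw, pr]

lemma sw_pr {m : ℕ} (hm : 0 < m) (a c : Fin m) : sw hm (pr a c) = pr c a := by
  apply Fin.ext
  show (pr a c).val % m * m + (pr a c).val / m = c.val * m + a.val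
  rw [pr_mod, pr_div]

/-- The key entry formula for a Monarch product. -/
lemma monarch_entry {m : ℕ} (hm : 0 < m) (L R : Matrix (Fin (m * m)) (Fin (m * m)) ℝ)
    (hL : BD m (m * m) L) (hR : BD m (m * m) R) (ℓ j k i : Fin m) :
    (permMat m (m * m) * L * (permMat m (m * m))ᵀ * R) (pr ℓ j) (pr k i)
      = L (pr j ℓ) (pr j k) * R (pr k j) (pr k i) := by
  have hPL : ∀ (a : Fin (m * m)) (y), (permMat m (m * m) * L) a y = L (sw hm a) y := by
    intro a y
    rw [Matrix.mul_apply]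
    simp [permMat_apply' hm, ite_mul]
  have hPLP : ∀ (a b : Fin (m * m)),
      (permMat m (m * m) * L * (permMat m (m * m))ᵀ) a b = L (sw hm a) (sw hm b) := by
    intro a b
    rw [Matrix.mul_apply]
    simp [hPL, Matrix.transpose_apply, permMat_apply' hm, mul_ite]
  rw [Matrix.mul_apply]
  rw [Finset.sum_eq_single (pr k j)]
  · rw [hPLP, sw_pr, sw_pr]
  · intro b _ hb
    by_cases hbk : b.val / m = k.val
    · have hbm : b.val % m ≠ j.val := by
        intro hbj
        apply hb
        rw [pr_decomp hm b]
        congr 1 <;> exact Fin.ext (by assumption)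
      rw [hPLP]
      have hz : L (sw hm (pr ℓ j)) (sw hm b) = 0 := by
        apply hL
        rw [sw_pr]
        show (pr j ℓ).val / m ≠ (sw hm b).val / m
        rw [pr_div]
        show j.val ≠ (pr _ _).val / m
        rw [pr_div]
        exact fun h => hbm h.symm
      rw [hz, zero_mul]
    · have hz : R b (pr k i) = 0 := by
        apply hR
        rw [pr_div]
        exact hbk
      rw [hz, mul_zero]
  · intro h
    exact absurd (Finset.mem_univ _) h

lemma blockOf_monarch {m : ℕ} (hm : 0 < m) (L R : Matrix (Fin (m * m)) (Fin (m * m)) ℝ)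
    (hL : BD m (m * m) L) (hR : BD m (m * m) R) (j k : Fin m) :
    blockOf (permMat m (m * m) * L * (permMat m (m * m))ᵀ * R) j k
      = Matrix.of fun ℓ i => L (pr j ℓ) (pr j k) * R (pr k j) (pr k i) := by
  ext ℓ i
  exact monarch_entry hm L R hL hR ℓ j k i

lemma blockOf_sub {m : ℕ} (A M : Matrix (Fin (m * m)) (Fin (m * m)) ℝ) (j k : Fin m) :
    blockOf (A - M) j k = blockOf A j k - blockOf M j k := by
  ext ℓ i
  simp [blockOf]

lemma frobSq_decomp {m : ℕ} (X : Matrix (Fin (m * m)) (Fin (m * m)) ℝ) :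
    frobSq X = ∑ j : Fin m, ∑ k : Fin m, frobSq (blockOf X j k) := by
  show (∑ a, ∑ c, X a c ^ 2) = _
  rw [sum_decomp (fun a => ∑ c, X a c ^ 2)]
  have h1 : ∀ (ℓ j : Fin m), (∑ c, X (pr ℓ j) c ^ 2) = ∑ k, ∑ i, X (pr ℓ j) (pr k i) ^ 2 :=
    fun ℓ j => sum_decomp _
  simp only [h1]
  rw [Finset.sum_comm]
  refine Finset.sum_congr rfl fun j _ => ?_
  rw [Finset.sum_comm]
  rfl

/-! ### Rank-one lemmas -/

lemma rank_outer_le_one {m : ℕ} (u v : Fin m → ℝ) :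
    (Matrix.of fun i j => u i * v j : Matrix (Fin m) (Fin m) ℝ).rank ≤ 1 := by
  have h : (Matrix.of fun i j => u i * v j : Matrix (Fin m) (Fin m) ℝ)
      = (Matrix.replicateCol Unit u) * (Matrix.replicateRow Unit v) := by
    ext i j
    simp [Matrix.mul_apply, Matrix.replicateCol, Matrix.replicateRow]
  rw [h]
  calc ((Matrix.replicateCol Unit u) * (Matrix.replicateRow Unit v)).rank ≤ (Matrix.replicateCol Unit u).rank :=
        Matrix.rank_mul_le_left _ _
    _ ≤ Fintype.card Unit := Matrix.rank_le_card_width _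
    _ = 1 := by simp

lemma rank_le_one_exists {m : ℕ} (B : Matrix (Fin m) (Fin m) ℝ) (h : B.rank ≤ 1) :
    ∃ u v : Fin m → ℝ, B = Matrix.of fun i j => u i * v j := by
  rw [Matrix.rank] at h
  obtain ⟨w, hw⟩ := finrank_le_one_iff.mp h
  choose c hc using fun j => hw ⟨B.mulVecLin (Pi.single j 1), LinearMap.mem_range_self _ _⟩
  refine ⟨(w : Fin m → ℝ), c, ?_⟩
  ext i j
  have h1 := congrArg Subtype.val (hc j)
  have h2 : (B.mulVecLin (Pi.single j 1)) i = B i j := by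
    simp [Matrix.mulVecLin_apply, Matrix.mulVec_single]
  have h3 : c j * (w : Fin m → ℝ) i = B i j := by
    rw [← h2]
    calc c j * (w : Fin m → ℝ) i = (↑(c j • w) : Fin m → ℝ) i := rfl
      _ = (B.mulVecLin (Pi.single j 1)) i := by rw [h1]
  simp only [Matrix.of_apply]
  rw [← h3]; ring

/-! ### Best rank-one approximation -/

lemma frob_expand {m : ℕ} (X : Matrix (Fin m) (Fin m) ℝ) (a b : Fin m → ℝ) :
    frobSq (X - Matrix.of fun i j => a i * b j)
      = frobSq X - 2 * ∑ j, b j * (∑ i, X i j * a i) + (∑ i, a i ^ 2) * (∑ j, b j ^ 2) := by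
  unfold frobSq
  simp only [Matrix.sub_apply, Matrix.of_apply]
  have expand : ∀ i j, (X i j - a i * b j) ^ 2
      = X i j ^ 2 - 2 * (X i j * (a i * b j)) + (a i * b j) ^ 2 := fun i j => by ring
  simp only [expand, Finset.sum_add_distrib, Finset.sum_sub_distrib]
  congr 1
  · congr 1
    rw [Finset.sum_comm, Finset.mul_sum]
    refine Finset.sum_congr rfl fun j _ => ?_
    rw [Finset.mul_sum, Finset.mul_sum]
    exact Finset.sum_congr rfl fun i _ => by ring
  · rw [Finset.sum_mul_sum]
    exact Finset.sum_congr rfl fun i _ => Finset.sum_congr rfl fun j _ => by ring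

lemma exists_best {m : ℕ} (hm : 0 < m) (X : Matrix (Fin m) (Fin m) ℝ) :
    ∃ u v : Fin m → ℝ, ∀ a b : Fin m → ℝ,
      frobSq (X - Matrix.of fun i j => u i * v j)
        ≤ frobSq (X - Matrix.of fun i j => a i * b j) := by
  set S : Set (Fin m → ℝ) := {u | ∑ i, u i ^ 2 = 1} with hS
  have hfc : Continuous fun u : Fin m → ℝ => ∑ i, u i ^ 2 := by
    apply continuous_finset_sum
    intro i _
    exact (continuous_apply i).pow 2
  have hclosed : IsClosed S := isClosed_eq hfc continuous_const
  have hbdd : Bornology.IsBounded S := by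
    apply Bornology.IsBounded.subset (Metric.isBounded_closedBall (x := (0 : Fin m → ℝ)) (r := 1))
    intro u hu
    rw [Metric.mem_closedBall, dist_zero_right]
    rw [pi_norm_le_iff_of_nonneg (by norm_num)]
    intro i
    have h1 : u i ^ 2 ≤ 1 := by
      rw [← hu]
      exact Finset.single_le_sum (fun j _ => sq_nonneg (u j)) (Finset.mem_univ i)
    rw [Real.norm_eq_abs, abs_le]
    constructor <;> nlinarith
  have hcompact : IsCompact S := Metric.isCompact_of_isClosed_isBounded hclosed hbdd
  have hne : S.Nonempty := by
    refine ⟨fun i => if i = ⟨0, hm⟩ then 1 else 0, ?_⟩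
    have h2 : ∀ i : Fin m, ((if i = ⟨0, hm⟩ then (1:ℝ) else 0)) ^ 2
        = if i = ⟨0, hm⟩ then (1:ℝ) else 0 := by
      intro i; split <;> norm_num
    simp only [hS, Set.mem_setOf_eq, h2, Finset.sum_ite_eq', Finset.mem_univ, if_true]
  have hφc : Continuous fun u : Fin m → ℝ => ∑ j, (∑ i, X i j * u i) ^ 2 := by
    apply continuous_finset_sum
    intro j _
    exact (continuous_finset_sum _ fun i _ => continuous_const.mul (continuous_apply i)).pow 2
  obtain ⟨u, huS, hmax⟩ := hcompact.exists_isMaxOn hne hφc.continuousOn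
  have huS' : ∑ i, u i ^ 2 = 1 := huS
  refine ⟨u, fun j => ∑ i, X i j * u i, ?_⟩
  intro a b
  rw [frob_expand, frob_expand, huS', one_mul]
  have hsq : ∀ j : Fin m, (∑ i, X i j * u i) * (∑ i, X i j * u i)
      = (∑ i, X i j * u i) ^ 2 := fun j => (sq _).symm
  simp only [hsq]
  set q : ℝ := ∑ j, (∑ i, X i j * u i) ^ 2 with hq
  set s : ℝ := ∑ i, a i ^ 2 with hs
  set c1 : ℝ := ∑ j, b j ^ 2 with hc1
  set c2 : ℝ := ∑ j, b j * (∑ i, X i j * a i) with hc2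
  have hq0 : 0 ≤ q := Finset.sum_nonneg fun j _ => sq_nonneg _
  have hs0 : 0 ≤ s := Finset.sum_nonneg fun i _ => sq_nonneg _
  rcases eq_or_lt_of_le hs0 with hsz | hsp
  · have ha : ∀ i, a i = 0 := by
      intro i
      have h1 : a i ^ 2 ≤ 0 := by
        rw [hsz]
        exact Finset.single_le_sum (fun j _ => sq_nonneg (a j)) (Finset.mem_univ i)
      nlinarith [sq_nonneg (a i)]
    have hc2z : c2 = 0 := by
      rw [hc2]
      apply Finset.sum_eq_zero
      intro j _
      have h3 : ∀ i : Fin m, X i j * a i = 0 := fun i => by rw [ha i, mul_zero]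
      rw [Finset.sum_congr rfl fun i _ => h3 i, Finset.sum_const_zero, mul_zero]
    rw [hc2z, ← hsz]
    ring_nf
    linarith
  · set c3 : ℝ := ∑ j, (∑ i, X i j * a i) ^ 2 with hc3
    set t : ℝ := Real.sqrt s with ht
    have ht2 : t ^ 2 = s := Real.sq_sqrt (le_of_lt hsp)
    have ht0 : 0 < t := Real.sqrt_pos.mpr hsp
    have ha'S : (fun i => a i / t) ∈ S := by
      show ∑ i, (a i / t) ^ 2 = 1
      simp only [div_pow, ← Finset.sum_div, ht2, ← hs]
      field_simp
    have hle := hmax ha'S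
    have hφa' : (∑ j, (∑ i, X i j * (a i / t)) ^ 2) = c3 / t ^ 2 := by
      rw [hc3, Finset.sum_div]
      refine Finset.sum_congr rfl fun j _ => ?_
      rw [← div_pow]
      congr 1
      rw [Finset.sum_div]
      exact Finset.sum_congr rfl fun i _ => by ring
    have h5 : c3 / s ≤ q := by
      have h5' := hle
      simp only [Set.mem_setOf_eq] at h5' ⊢
      calc c3 / s = c3 / t ^ 2 := by rw [ht2]
        _ = ∑ j, (∑ i, X i j * (a i / t)) ^ 2 := hφa'.symm
        _ ≤ q := h5'
    have hkey : 0 ≤ ∑ j, (s * b j - (∑ i, X i j * a i)) ^ 2 :=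
      Finset.sum_nonneg fun j _ => sq_nonneg _
    have hexp : ∑ j, (s * b j - (∑ i, X i j * a i)) ^ 2
        = s ^ 2 * c1 - 2 * s * c2 + c3 := by
      rw [hc1, hc2, hc3, Finset.mul_sum, Finset.mul_sum, ← Finset.sum_sub_distrib,
        ← Finset.sum_add_distrib]
      exact Finset.sum_congr rfl fun j _ => by ring
    have hdiv : s * (c3 / s) = c3 := by field_simp
    have hkey2 : 0 ≤ s * (s * c1 - 2 * c2 + c3 / s) := by nlinarith [hkey, hexp, hdiv]
    have h6 : 0 ≤ s * c1 - 2 * c2 + c3 / s := by nlinarith [hkey2, hsp]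
    linarith

/-! ### Construction of the block-diagonal factors -/

def Lmat {m : ℕ} (hm : 0 < m) (u : Fin m → Fin m → Fin m → ℝ) :
    Matrix (Fin (m * m)) (Fin (m * m)) ℝ :=
  Matrix.of fun x y => if x.val / m = y.val / m
    then u ⟨x.val / m, div_lt_of_sq x⟩ ⟨y.val % m, mod_lt_of_sq hm y⟩ ⟨x.val % m, mod_lt_of_sq hm x⟩
    else 0

def Rmat {m : ℕ} (hm : 0 < m) (v : Fin m → Fin m → Fin m → ℝ) :
    Matrix (Fin (m * m)) (Fin (m * m)) ℝ :=
  Matrix.of fun x y => if x.val / m = y.val / m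
    then v ⟨x.val % m, mod_lt_of_sq hm x⟩ ⟨x.val / m, div_lt_of_sq x⟩ ⟨y.val % m, mod_lt_of_sq hm y⟩
    else 0

lemma Lmat_bd {m : ℕ} (hm : 0 < m) (u : Fin m → Fin m → Fin m → ℝ) :
    BD m (m * m) (Lmat hm u) := by
  intro x y h
  simp only [Lmat, Matrix.of_apply]
  rw [if_neg h]

lemma Rmat_bd {m : ℕ} (hm : 0 < m) (v : Fin m → Fin m → Fin m → ℝ) :
    BD m (m * m) (Rmat hm v) := by
  intro x y h
  simp only [Rmat, Matrix.of_apply]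
  rw [if_neg h]

lemma Lmat_pr {m : ℕ} (hm : 0 < m) (u : Fin m → Fin m → Fin m → ℝ) (j k ℓ : Fin m) :
    Lmat hm u (pr j ℓ) (pr j k) = u j k ℓ := by
  simp only [Lmat, Matrix.of_apply]
  rw [if_pos (by rw [pr_div, pr_div])]
  simp only [pr_div, pr_mod, Fin.eta]

lemma Rmat_pr {m : ℕ} (hm : 0 < m) (v : Fin m → Fin m → Fin m → ℝ) (j k i : Fin m) :
    Rmat hm v (pr k j) (pr k i) = v j k i := by
  simp only [Rmat, Matrix.of_apply]
  rw [if_pos (by rw [pr_div, pr_div])]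
  simp only [pr_div, pr_mod, Fin.eta]

/-- there is a Monarch matrix `M*` minimizing `‖A − M‖_F` over all Monarch
matrices, with minimal value `‖A − M*‖_F² = Σ_{j,k} min_{rank B ≤ 1} ‖A_{jk} − B‖_F²`,
each inner minimum being attained. -/
theorem monarch_projection (m : ℕ) (hm : 2 ≤ m)
    (A : Matrix (Fin (m * m)) (Fin (m * m)) ℝ) :
    ∃ Mstar : Matrix (Fin (m * m)) (Fin (m * m)) ℝ,
      IsMonarch m Mstar ∧
      (∀ M, IsMonarch m M → frobNorm (A - Mstar) ≤ frobNorm (A - M)) ∧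
      ∃ B : Fin m → Fin m → Matrix (Fin m) (Fin m) ℝ,
        (∀ j k : Fin m,
          (B j k).rank ≤ 1 ∧
          ∀ B' : Matrix (Fin m) (Fin m) ℝ, B'.rank ≤ 1 →
            frobSq (blockOf A j k - B j k) ≤ frobSq (blockOf A j k - B')) ∧
        frobSq (A - Mstar) = ∑ j, ∑ k, frobSq (blockOf A j k - B j k) := by
  have hm0 : 0 < m := by omega
  choose u v hbest using fun j k : Fin m => exists_best hm0 (blockOf A j k)
  have hsum : ∀ M : Matrix (Fin (m * m)) (Fin (m * m)) ℝ,
      frobSq (A - M) = ∑ j, ∑ k, frobSq (blockOf A j k - blockOf M j k) := by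
    intro M
    rw [frobSq_decomp (A - M)]
    exact Finset.sum_congr rfl fun j _ => Finset.sum_congr rfl fun k _ => by
      rw [blockOf_sub]
  have hblockstar : ∀ j k : Fin m,
      blockOf (permMat m (m * m) * Lmat hm0 u * (permMat m (m * m))ᵀ * Rmat hm0 v) j k
        = Matrix.of fun ℓ i => u j k ℓ * v j k i := by
    intro j k
    rw [blockOf_monarch hm0 _ _ (Lmat_bd hm0 u) (Rmat_bd hm0 v)]
    ext ℓ i
    simp only [Matrix.of_apply, Lmat_pr, Rmat_pr]
  refine ⟨permMat m (m * m) * Lmat hm0 u * (permMat m (m * m))ᵀ * Rmat hm0 v,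
    ⟨Lmat hm0 u, Rmat hm0 v, Lmat_bd hm0 u, Rmat_bd hm0 v, rfl⟩, ?_, ?_⟩
  · intro M hM
    obtain ⟨L', R', hL', hR', rfl⟩ := hM
    unfold frobNorm
    apply Real.sqrt_le_sqrt
    rw [hsum, hsum]
    refine Finset.sum_le_sum fun j _ => Finset.sum_le_sum fun k _ => ?_
    rw [hblockstar j k, blockOf_monarch hm0 _ _ hL' hR' j k]
    exact hbest j k (fun ℓ => L' (pr j ℓ) (pr j k)) (fun i => R' (pr k j) (pr k i))
  · refine ⟨fun j k => Matrix.of fun ℓ i => u j k ℓ * v j k i, fun j k => ⟨?_, ?_⟩, ?_⟩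
    · exact rank_outer_le_one _ _
    · intro B' hB'
      obtain ⟨a, b, rfl⟩ := rank_le_one_exists B' hB'
      exact hbest j k a b
    · rw [hsum]
      exact Finset.sum_congr rfl fun j _ => Finset.sum_congr rfl fun k _ => by
        rw [hblockstar j k]
end

section
/- Let m = 2^k for an integer k ≥ 1 and let n = m². The Sylvester–Hadamard matrix H_n of size n×n, defined by H_n[i,j] = (−1)^{⟨i,j⟩} where ⟨i,j⟩ denotes the sum over t of the products of the t-th binary digits of i and j, is a Monarch matrix: H_n ∈ M(m, n). -/
open Matrix

/-- `DB b n L`: `L[i,j] = 0` whenever `i ≢ j (mod b)`. -/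
def DB (b n : ℕ) (L : Matrix (Fin n) (Fin n) ℝ) : Prop :=
  ∀ i j : Fin n, i.val % b ≠ j.val % b → L i j = 0

/-- The small Hadamard sign `(-1)^{⟨a,b⟩}` using the first `k` bits. -/
noncomputable def hH (k a b : ℕ) : ℝ :=
  (-1 : ℝ) ^ (∑ t ∈ Finset.range k, (a / 2 ^ t % 2) * (b / 2 ^ t % 2))

lemma bit_mod (k t i : ℕ) (ht : t < k) : i % 2 ^ k / 2 ^ t % 2 = i / 2 ^ t % 2 := by
  rw [← Nat.mod_mul_right_div_self, ← Nat.mod_mul_right_div_self,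
    Nat.mod_mod_of_dvd i (by rw [← pow_succ]; exact pow_dvd_pow 2 ht)]

lemma bit_div (k t i : ℕ) : i / 2 ^ (k + t) % 2 = i / 2 ^ k / 2 ^ t % 2 := by
  rw [Nat.div_div_eq_div_mul, pow_add]

lemma sum_split (k i j : ℕ) :
    (∑ t ∈ Finset.range (2 * k), (i / 2 ^ t % 2) * (j / 2 ^ t % 2)) =
    (∑ t ∈ Finset.range k, (i % 2 ^ k / 2 ^ t % 2) * (j % 2 ^ k / 2 ^ t % 2)) +
    (∑ t ∈ Finset.range k, (i / 2 ^ k / 2 ^ t % 2) * (j / 2 ^ k / 2 ^ t % 2)) := by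
  rw [two_mul, Finset.sum_range_add]
  congr 1
  · exact Finset.sum_congr rfl fun t ht => by
      rw [bit_mod k t i (Finset.mem_range.mp ht), bit_mod k t j (Finset.mem_range.mp ht)]
  · exact Finset.sum_congr rfl fun t _ => by rw [bit_div, bit_div]

/-- for `m = 2^k` and `n = m²`, the Sylvester–Hadamard matrix
`H_n[i,j] = (−1)^{Σ_t i_t j_t}` (sum over binary digits) is a Monarch matrix:
`H_n ∈ M(m, n)`, i.e. `H_n = L · R` with `L ∈ DB(m,n)` and `R ∈ BD(m,n)`. -/
theorem hadamard_is_monarch (k : ℕ) (hk : 1 ≤ k) (m : ℕ) (hm : m = 2 ^ k) :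
    ∃ L R : Matrix (Fin (m * m)) (Fin (m * m)) ℝ,
      DB m (m * m) L ∧ BD m (m * m) R ∧
      (Matrix.of fun i j : Fin (m * m) =>
        (-1 : ℝ) ^ (∑ t ∈ Finset.range (2 * k), (i.val / 2 ^ t % 2) * (j.val / 2 ^ t % 2)))
        = L * R := by
  subst hm
  set m := 2 ^ k with hm
  have hm0 : 0 < m := by rw [hm]; positivity
  refine ⟨Matrix.of fun i j : Fin (m * m) =>
      if i.val % m = j.val % m then hH k (i.val / m) (j.val / m) else 0,
    Matrix.of fun i j : Fin (m * m) =>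
      if i.val / m = j.val / m then hH k (i.val % m) (j.val % m) else 0,
    ?_, ?_, ?_⟩
  · intro i j hij
    simp [hij]
  · intro i j hij
    simp [hij]
  · ext i j
    rw [Matrix.mul_apply]
    have h1 : j.val / m < m := Nat.div_lt_of_lt_mul (by simpa [mul_comm] using j.isLt)
    have h2 : i.val % m < m := Nat.mod_lt _ hm0
    have hp : j.val / m * m + i.val % m < m * m := by
      calc j.val / m * m + i.val % m < j.val / m * m + m := by omega
        _ = (j.val / m + 1) * m := by ring
        _ ≤ m * m := Nat.mul_le_mul_right m h1
    set p0 : Fin (m * m) := ⟨j.val / m * m + i.val % m, hp⟩ with hp0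
    have hpm : (p0 : ℕ) % m = i.val % m := by
      show (j.val / m * m + i.val % m) % m = i.val % m
      rw [add_comm, Nat.add_mul_mod_self_right, Nat.mod_mod_of_dvd i.val dvd_rfl]
    have hpd : (p0 : ℕ) / m = j.val / m := by
      show (j.val / m * m + i.val % m) / m = j.val / m
      rw [mul_comm, Nat.mul_add_div hm0, Nat.div_eq_of_lt h2, Nat.add_zero]
    rw [Fintype.sum_eq_single p0 ?_]
    · simp only [Matrix.of_apply]
      rw [if_pos hpm.symm, if_pos hpd, hpm, hpd, hH, hH,
        sum_split k i.val j.val, pow_add]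
      exact mul_comm _ _
    · intro p hpne
      by_cases hb1 : p.val % m = i.val % m
      · by_cases hb2 : p.val / m = j.val / m
        · exfalso
          apply hpne
          apply Fin.ext
          have hdm : p.val = p.val / m * m + p.val % m := (Nat.div_add_mod' p.val m).symm
          rw [hdm, hb1, hb2]
        · simp only [Matrix.of_apply]
          rw [if_neg hb2, mul_zero]
      · simp only [Matrix.of_apply]
        rw [if_neg (fun h => hb1 h.symm), zero_mul]
end
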